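/- Let n = 30, β = 2π/30, and A_j = exp(iβj) ∈ ℂ (indices modulo 30) the vertices of the regular 30-gon inscribed in the unit circle. Then the three diagonals A_0A_6, A_1A_7, and A_4A_23 are concurrent: there exists a point of ℂ lying on all three lines. Equivalently, the intersection point φ_6(A_1) = (cos(6β/2)/cos(β/2))·exp(i·5β/2)·exp(iβ) of the consecutive 6-th diagonals A_0A_6 and A_1A_7 lies on the line through A_4 and A_23. (This sporadic extra incidence is why K(30;6,10), K(30;6,11), K(30;10,11) fail to be (90_4) configurations.) -/

import Mathlib

open Real
open Complex

lemma exp_add_exp (x y : ℝ) : Complex.exp ((x:ℂ) * I) + Complex.exp ((y:ℂ) * I)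
    = 2 * (Real.cos ((x-y)/2) : ℝ) * Complex.exp ((((x+y)/2 : ℝ) : ℂ) * I) := by
  have h1 : (x:ℂ) * I = (((x+y)/2 : ℝ) : ℂ) * I + (((x-y)/2 : ℝ) : ℂ) * I := by push_cast; ring
  have h2 : (y:ℂ) * I = (((x+y)/2 : ℝ) : ℂ) * I + ((-((x-y)/2) : ℝ) : ℂ) * I := by push_cast; ring
  rw [h1, h2, Complex.exp_add, Complex.exp_add]
  simp only [Complex.exp_mul_I, ← Complex.ofReal_cos, ← Complex.ofReal_sin,
    Real.cos_neg, Real.sin_neg]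
  push_cast
  ring

lemma exp_sub_exp (x y : ℝ) : Complex.exp ((x:ℂ) * I) - Complex.exp ((y:ℂ) * I)
    = 2 * (Real.sin ((x-y)/2) : ℝ) * I * Complex.exp ((((x+y)/2 : ℝ) : ℂ) * I) := by
  have h1 : (x:ℂ) * I = (((x+y)/2 : ℝ) : ℂ) * I + (((x-y)/2 : ℝ) : ℂ) * I := by push_cast; ring
  have h2 : (y:ℂ) * I = (((x+y)/2 : ℝ) : ℂ) * I + ((-((x-y)/2) : ℝ) : ℂ) * I := by push_cast; ring
  rw [h1, h2, Complex.exp_add, Complex.exp_add]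
  simp only [Complex.exp_mul_I, ← Complex.ofReal_cos, ← Complex.ofReal_sin,
    Real.cos_neg, Real.sin_neg]
  push_cast
  ring

lemma mem_line {a b z : ℂ} (ha : ‖a‖ = 1) (hb : ‖b‖ = 1)
    (hab : a ≠ b) (h : z + a * b * (starRingEnd ℂ) z = a + b) :
    ∃ t : ℝ, z = a + t • (b - a) := by
  have ha1 : a * (starRingEnd ℂ) a = 1 := by
    rw [Complex.mul_conj]; norm_cast
    rw [Complex.normSq_eq_norm_sq, ha]; norm_num
  have hb1 : b * (starRingEnd ℂ) b = 1 := by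
    rw [Complex.mul_conj]; norm_cast
    rw [Complex.normSq_eq_norm_sq, hb]; norm_num
  have hba : b - a ≠ 0 := sub_ne_zero.mpr (Ne.symm hab)
  have hcba : (starRingEnd ℂ) b - (starRingEnd ℂ) a ≠ 0 := by
    rw [← map_sub]
    intro hc
    apply hba
    have := congrArg (starRingEnd ℂ) hc
    simpa using this
  have key : ((starRingEnd ℂ) ((z - a)/(b - a))) = (z - a)/(b - a) := by
    rw [map_div₀, map_sub, map_sub, div_eq_div_iff hcba hba]
    set ca := (starRingEnd ℂ) a
    set cb := (starRingEnd ℂ) b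
    set cz := (starRingEnd ℂ) z
    linear_combination ((b - a) * ca * cb) * h
      + (cb * ((z - a) - (b - a) * b * cz)) * ha1
      + ((b - a) * (ca - cz) - (z - a) * ca) * hb1
  refine ⟨((z - a)/(b - a)).re, ?_⟩
  have hre : ((((z - a)/(b - a)).re : ℝ) : ℂ) = (z - a)/(b - a) := Complex.conj_eq_iff_re.mp key
  rw [Complex.real_smul, hre, div_mul_cancel₀ _ hba]
  ring

lemma exp_mul_exp (x y : ℝ) : Complex.exp ((x:ℂ) * I) * Complex.exp ((y:ℂ) * I)
    = Complex.exp (((x + y : ℝ) : ℂ) * I) := by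
  rw [← Complex.exp_add]; congr 1; push_cast; ring

lemma exp_ne_exp (x y : ℝ) (h : Real.sin ((x - y)/2) ≠ 0) :
    Complex.exp ((x:ℂ) * I) ≠ Complex.exp ((y:ℂ) * I) := by
  intro he
  apply h
  have h2 : Complex.exp ((x:ℂ) * I) - Complex.exp ((y:ℂ) * I) = 0 := sub_eq_zero.mpr he
  rw [exp_sub_exp] at h2
  have h3 : ((Real.sin ((x - y)/2) : ℝ) : ℂ) = 0 := by
    rcases mul_eq_zero.mp h2 with h4 | h4
    · rcases mul_eq_zero.mp h4 with h5 | h5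
      · rcases mul_eq_zero.mp h5 with h6 | h6
        · norm_num at h6
        · exact h6
      · exact absurd h5 Complex.I_ne_zero
    · exact absurd h4 (Complex.exp_ne_zero _)
  exact_mod_cast h3

lemma conj_exp (x : ℝ) : (starRingEnd ℂ) (Complex.exp ((x:ℂ) * I))
    = Complex.exp (((-x : ℝ) : ℂ) * I) := by
  rw [← Complex.exp_conj, map_mul, Complex.conj_ofReal, Complex.conj_I]
  congr 1; push_cast; ring

lemma chord (c u v : ℝ)
    (h : c * Real.cos ((7*π/30 - (u + v - 7*π/30))/2) = Real.cos ((u - v)/2)) :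
    (c:ℂ) * Complex.exp (((7*π/30 : ℝ):ℂ) * I)
      + Complex.exp ((u:ℂ) * I) * Complex.exp ((v:ℂ) * I)
        * ((c:ℂ) * Complex.exp (((-(7*π/30) : ℝ):ℂ) * I))
      = Complex.exp ((u:ℂ) * I) + Complex.exp ((v:ℂ) * I) := by
  have e1 : Complex.exp ((u:ℂ) * I) * Complex.exp ((v:ℂ) * I)
      * ((c:ℂ) * Complex.exp (((-(7*π/30) : ℝ):ℂ) * I))
      = (c:ℂ) * Complex.exp (((u + v + -(7*π/30) : ℝ):ℂ) * I) := by
    rw [exp_mul_exp u v, mul_left_comm, exp_mul_exp]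
  rw [e1, exp_add_exp u v]
  have e2 : (c:ℂ) * Complex.exp (((7*π/30 : ℝ):ℂ) * I)
      + (c:ℂ) * Complex.exp (((u + v + -(7*π/30) : ℝ):ℂ) * I)
      = (c:ℂ) * (Complex.exp (((7*π/30 : ℝ):ℂ) * I)
        + Complex.exp (((u + v + -(7*π/30) : ℝ):ℂ) * I)) := by ring
  rw [e2, exp_add_exp (7*π/30) (u + v + -(7*π/30))]
  rw [show (7*π/30 + (u + v + -(7*π/30)))/2 = (u+v)/2 by ring]
  rw [show (7*π/30 - (u + v + -(7*π/30)))/2 = (7*π/30 - (u + v - 7*π/30))/2 by ring]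
  rw [← h]
  push_cast
  ring

lemma cos30_pos : 0 < Real.cos (π/30) :=
  Real.cos_pos_of_mem_Ioo ⟨by linarith [Real.pi_pos], by linarith [Real.pi_pos]⟩

lemma key30 : Real.cos (π/5) + 2 * Real.cos (π/30) * Real.cos (19*π/30) = 0 := by
  have h1 : Real.cos (19*π/30 + π/30) + Real.cos (19*π/30 - π/30)
      = 2 * Real.cos (19*π/30) * Real.cos (π/30) := by
    rw [Real.cos_add, Real.cos_sub]; ring
  have h2 : Real.cos (19*π/30 + π/30) = -(1/2) := by
    rw [show 19*π/30 + π/30 = π - π/3 by ring, Real.cos_pi_sub, Real.cos_pi_div_three]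
  have h3 : Real.cos (19*π/30 - π/30) = 1 - 2 * Real.cos (π/5)^2 := by
    rw [show 19*π/30 - π/30 = π - 2*(π/5) by ring, Real.cos_pi_sub, Real.cos_two_mul]; ring
  have h4 : 4 * Real.cos (π/5)^2 - 2 * Real.cos (π/5) - 1 = 0 :=
    Real.quadratic_root_cos_pi_div_five
  linear_combination (-1) * h1 + h2 + h3 - (1/2) * h4

/-- in the regular 30-gon the three diagonals
`A 0 A 6`, `A 1 A 7` and `A 4 A 23` are concurrent:
some point of ℂ lies on all three lines.  (Sporadic extra incidence behind K(30;6,10), K(30;6,11), K(30;10,11).) -/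
theorem stmt_10 (β : ℝ) (hβ : β = 2 * π / 30)
    (A : ℤ → ℂ) (hA : ∀ j : ℤ, A j = Complex.exp ((β * j : ℝ) * Complex.I)) :
    ∃ p : ℂ,
      (∃ t : ℝ, p = A 0 + t • (A 6 - A 0)) ∧
      (∃ t : ℝ, p = A 1 + t • (A 7 - A 1)) ∧
      (∃ t : ℝ, p = A 4 + t • (A 23 - A 4)) := by
  have hβ' : β = π/15 := by rw [hβ]; ring
  have e : ∀ (j : ℤ) (θ : ℝ), β * (j : ℝ) = θ → A j = Complex.exp ((θ:ℂ) * Complex.I) := by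
    intro j θ hjθ
    rw [hA, hjθ]
  have h0 := e 0 0 (by push_cast; ring)
  have h6 := e 6 (2*π/5) (by push_cast; rw [hβ']; ring)
  have h1 := e 1 (π/15) (by push_cast; rw [hβ']; ring)
  have h7 := e 7 (7*π/15) (by push_cast; rw [hβ']; ring)
  have h4 := e 4 (4*π/15) (by push_cast; rw [hβ']; ring)
  have h23 := e 23 (23*π/15) (by push_cast; rw [hβ']; ring)
  set c : ℝ := Real.cos (π/5) / Real.cos (π/30) with hc
  have hcp : (starRingEnd ℂ) ((c:ℂ) * Complex.exp (((7*π/30 : ℝ):ℂ) * I))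
      = (c:ℂ) * Complex.exp (((-(7*π/30) : ℝ):ℂ) * I) := by
    rw [map_mul, Complex.conj_ofReal, conj_exp]
  have hc30 : Real.cos (π/30) ≠ 0 := ne_of_gt cos30_pos
  refine ⟨(c:ℂ) * Complex.exp (((7*π/30 : ℝ):ℂ) * I), ?_, ?_, ?_⟩
  · rw [h0, h6]
    refine mem_line (Complex.norm_exp_ofReal_mul_I 0) (Complex.norm_exp_ofReal_mul_I (2*π/5))
      (exp_ne_exp _ _ ?_) ?_
    · rw [show ((0:ℝ) - 2*π/5)/2 = -(π/5) by ring, Real.sin_neg, neg_ne_zero]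
      exact ne_of_gt (Real.sin_pos_of_pos_of_lt_pi (by positivity) (by linarith [Real.pi_pos]))
    · rw [hcp]
      refine chord c 0 (2*π/5) ?_
      rw [show (7*π/30 - (0 + 2*π/5 - 7*π/30))/2 = π/30 by ring,
        show ((0:ℝ) - 2*π/5)/2 = -(π/5) by ring, Real.cos_neg, hc]
      field_simp
  · rw [h1, h7]
    refine mem_line (Complex.norm_exp_ofReal_mul_I (π/15)) (Complex.norm_exp_ofReal_mul_I (7*π/15))
      (exp_ne_exp _ _ ?_) ?_
    · rw [show (π/15 - 7*π/15)/2 = -(π/5) by ring, Real.sin_neg, neg_ne_zero]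
      exact ne_of_gt (Real.sin_pos_of_pos_of_lt_pi (by positivity) (by linarith [Real.pi_pos]))
    · rw [hcp]
      refine chord c (π/15) (7*π/15) ?_
      rw [show (7*π/30 - (π/15 + 7*π/15 - 7*π/30))/2 = -(π/30) by ring,
        show (π/15 - 7*π/15)/2 = -(π/5) by ring, Real.cos_neg, Real.cos_neg, hc]
      field_simp
  · rw [h4, h23]
    refine mem_line (Complex.norm_exp_ofReal_mul_I (4*π/15)) (Complex.norm_exp_ofReal_mul_I (23*π/15))
      (exp_ne_exp _ _ ?_) ?_
    · rw [show (4*π/15 - 23*π/15)/2 = -(19*π/30) by ring, Real.sin_neg, neg_ne_zero]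
      exact ne_of_gt (Real.sin_pos_of_pos_of_lt_pi (by positivity) (by linarith [Real.pi_pos]))
    · rw [hcp]
      refine chord c (4*π/15) (23*π/15) ?_
      rw [show (7*π/30 - (4*π/15 + 23*π/15 - 7*π/30))/2 = -(2*π/3) by ring,
        show (4*π/15 - 23*π/15)/2 = -(19*π/30) by ring, Real.cos_neg, Real.cos_neg,
        show 2*π/3 = π - π/3 by ring, Real.cos_pi_sub, Real.cos_pi_div_three, hc]
      field_simp
      rw [show π * 19 / 30 = 19 * π / 30 by ring]
      linear_combination (-1 : ℝ) * key30
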